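/- If f ∈ S*_ρ with zf'(z)/f(z) = 1 + sinh^{-1}(w(z)), where w = (p-1)/(p+1) and p(z) = 1 + ∑ p_n z^n, then the Taylor coefficients of f satisfy a_2 = p_1/2, a_3 = p_2/4, and a_4 = (-p_1^3 - 6p_1 p_2 + 24p_3)/144. -/

import Mathlib

open Filter Topology
open scoped ENNReal NNReal

/-- Principal complex inverse hyperbolic sine. -/
noncomputable def carcsinh (z : ℂ) : ℂ := Complex.log (z + (z ^ 2 + 1) ^ ((1 : ℂ) / 2))

lemma my_hasFP {a : ℕ → ℂ} {f : ℂ → ℂ}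
    (hf : ∀ᶠ z in 𝓝 (0:ℂ), HasSum (fun n : ℕ => a n * z ^ n) (f z)) :
    ∃ r : ℝ≥0∞, 0 < r ∧ HasFPowerSeriesOnBall f (FormalMultilinearSeries.ofScalars ℂ a) 0 r := by
  rw [Metric.eventually_nhds_iff] at hf
  obtain ⟨ε, hε, h⟩ := hf
  set q := FormalMultilinearSeries.ofScalars ℂ a with hq
  have hc : ((ε/2).toNNReal : ℝ) = ε/2 := Real.coe_toNNReal _ (by positivity)
  have hrad : ((ε/2).toNNReal : ℝ≥0∞) ≤ q.radius := by
    apply FormalMultilinearSeries.le_radius_of_summable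
    have hs : HasSum (fun n : ℕ => a n * ((ε/2 : ℝ) : ℂ) ^ n) (f ((ε/2 : ℝ) : ℂ)) := by
      apply h
      rw [dist_zero_right, Complex.norm_real, Real.norm_eq_abs, abs_of_pos (by positivity)]
      linarith
    have hsum := (summable_norm_iff.mpr hs.summable)
    convert hsum using 2 with n
    rw [hq, FormalMultilinearSeries.ofScalars_norm, hc]
    simp [norm_mul, norm_pow, Complex.norm_real, Real.norm_eq_abs,
      abs_of_pos (show (0:ℝ) < ε/2 by positivity)]
    exact Or.inl (by rw [abs_of_pos hε])
  refine ⟨((ε/2).toNNReal : ℝ≥0∞), ?_, hrad, ?_, ?_⟩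
  · simp only [ENNReal.coe_pos]
    rw [← NNReal.coe_pos, hc]; positivity
  · simp only [ENNReal.coe_pos]
    rw [← NNReal.coe_pos, hc]; positivity
  · intro y hy
    simp only [EMetric.mem_ball, edist_zero_right] at hy
    have hy' : ‖y‖ < ε := by
      have h2 : ‖y‖ < ((ε/2).toNNReal : ℝ) := by
        rw [← coe_nnnorm, NNReal.coe_lt_coe]
        exact_mod_cast hy
      rw [hc] at h2; linarith
    have := h (y := y) (by rw [dist_zero_right]; exact hy')
    rw [zero_add]
    convert this using 2 with n
    · rfl
    rw [hq, FormalMultilinearSeries.ofScalars_apply_eq, smul_eq_mul]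

lemma my_coeff {a : ℕ → ℂ} {f : ℂ → ℂ} {r : ℝ≥0∞}
    (h : HasFPowerSeriesOnBall f (FormalMultilinearSeries.ofScalars ℂ a) 0 r) (n : ℕ) :
    iteratedDeriv n f 0 = (Nat.factorial n : ℂ) * a n := by
  have := h.factorial_smul (1 : ℂ) n
  rw [FormalMultilinearSeries.ofScalars_apply_eq] at this
  rw [iteratedDeriv_eq_iteratedFDeriv, ← this]
  simp [smul_eq_mul, mul_comm]

lemma my_analyticAt_deriv {f : ℂ → ℂ} {x : ℂ} (h : AnalyticAt ℂ f x) :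
    AnalyticAt ℂ (deriv f) x := by
  have h1 : AnalyticAt ℂ (fun y => (ContinuousLinearMap.apply ℂ ℂ (1:ℂ)) (fderiv ℂ f y)) x :=
    ((ContinuousLinearMap.apply ℂ ℂ (1:ℂ)).analyticAt _).comp h.fderiv
  have : (fun y => (ContinuousLinearMap.apply ℂ ℂ (1:ℂ)) (fderiv ℂ f y)) = deriv f := by
    funext y
    simp [ContinuousLinearMap.apply_apply, fderiv_apply_one_eq_deriv]
  rwa [this] at h1

lemma my_sinh_carcsinh {u : ℂ} (h1 : u ^ 2 + 1 ≠ 0)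
    (h2 : u + (u ^ 2 + 1) ^ ((1:ℂ)/2) ≠ 0) :
    Complex.sinh (carcsinh u) = u := by
  set s := (u ^ 2 + 1) ^ ((1:ℂ)/2) with hs0
  have hs : s * s = u ^ 2 + 1 := by
    rw [hs0, ← Complex.cpow_add _ _ h1]
    norm_num
  rw [carcsinh, Complex.sinh, Complex.exp_log h2, Complex.exp_neg, Complex.exp_log h2]
  rw [div_eq_iff (two_ne_zero)]
  field_simp
  ring_nf
  linear_combination hs

lemma my_F_analytic : AnalyticAt ℂ (fun u : ℂ => u + (u ^ 2 + 1) ^ ((1:ℂ)/2)) 0 := by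
  apply analyticAt_id.add
  apply AnalyticAt.cpow ((analyticAt_id.pow 2).add analyticAt_const) analyticAt_const
  norm_num [Complex.mem_slitPlane_iff]

lemma my_carcsinh_analytic : AnalyticAt ℂ carcsinh 0 := by
  have h := my_F_analytic.clog (by norm_num [Complex.mem_slitPlane_iff])
  exact h

lemma my_carcsinh_zero : carcsinh 0 = 0 := by
  rw [carcsinh]
  norm_num

lemma my_step {U V : ℂ → ℂ} (hU : U =ᶠ[𝓝 (0:ℂ)] fun _ => 0)
    (hD : ∀ᶠ z in 𝓝 (0:ℂ), deriv U z = V z) : V =ᶠ[𝓝 (0:ℂ)] fun _ => 0 := by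
  have h1 : deriv U =ᶠ[𝓝 (0:ℂ)] deriv (fun _ => (0:ℂ)) := hU.deriv
  filter_upwards [h1, hD] with z h1z hDz
  rw [← hDz, h1z, deriv_const]

lemma itd2 (f : ℂ → ℂ) : iteratedDeriv 2 f = deriv (deriv f) := by
  rw [show (2:ℕ) = 1 + 1 from rfl, iteratedDeriv_succ, iteratedDeriv_one]

lemma itd3 (f : ℂ → ℂ) : iteratedDeriv 3 f = deriv (deriv (deriv f)) := by
  rw [show (3:ℕ) = 2 + 1 from rfl, iteratedDeriv_succ, itd2]

lemma itd4 (f : ℂ → ℂ) : iteratedDeriv 4 f = deriv (deriv (deriv (deriv f))) := by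
  rw [show (4:ℕ) = 3 + 1 from rfl, iteratedDeriv_succ, itd3]

theorem coeff_relations_S_rho
    (f P : ℂ → ℂ) (a p : ℕ → ℂ)
    (ha0 : a 0 = 0) (ha1 : a 1 = 1) (hp0 : p 0 = 1)
    (hf : ∀ᶠ z in 𝓝 (0 : ℂ), HasSum (fun n : ℕ => a n * z ^ n) (f z))
    (hP : ∀ᶠ z in 𝓝 (0 : ℂ), HasSum (fun n : ℕ => p n * z ^ n) (P z))
    (hPre : ∀ z ∈ Metric.ball (0 : ℂ) 1, 0 < (P z).re)
    (hsub : ∀ᶠ z in 𝓝[≠] (0 : ℂ),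
      z * deriv f z / f z = 1 + carcsinh ((P z - 1) / (P z + 1))) :
    a 2 = p 1 / 2 ∧ a 3 = p 2 / 4 ∧
      a 4 = (-(p 1) ^ 3 - 6 * p 1 * p 2 + 24 * p 3) / 144 := by
  classical
  obtain ⟨r, hr0, hfp⟩ := my_hasFP hf
  obtain ⟨ρ, hρ0, hPp⟩ := my_hasFP hP
  have hfa : AnalyticAt ℂ f 0 := hfp.analyticAt
  have hPa : AnalyticAt ℂ P 0 := hPp.analyticAt
  have hfd := my_coeff hfp
  have hPd := my_coeff hPp
  have hf0 : f 0 = 0 := by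
    have := hfd 0; rw [iteratedDeriv_zero] at this; simpa [ha0] using this
  have hP0 : P 0 = 1 := by
    have := hPd 0; rw [iteratedDeriv_zero] at this; simpa [hp0] using this
  have hf1v : deriv f 0 = 1 := by
    have := hfd 1; rw [iteratedDeriv_one] at this
    simpa [ha1] using this
  have hf2v : deriv (deriv f) 0 = 2 * a 2 := by
    have := hfd 2; rw [itd2] at this
    simpa [Nat.factorial] using this
  have hf3v : deriv (deriv (deriv f)) 0 = 6 * a 3 := by
    have := hfd 3; rw [itd3] at this
    simpa [Nat.factorial] using this
  have hf4v : deriv (deriv (deriv (deriv f))) 0 = 24 * a 4 := by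
    have := hfd 4; rw [itd4] at this
    simpa [Nat.factorial] using this
  have hp1v : deriv P 0 = p 1 := by
    have := hPd 1; rw [iteratedDeriv_one] at this
    simpa using this
  have hp2v : deriv (deriv P) 0 = 2 * p 2 := by
    have := hPd 2; rw [itd2] at this
    simpa [Nat.factorial] using this
  have hp3v : deriv (deriv (deriv P)) 0 = 6 * p 3 := by
    have := hPd 3; rw [itd3] at this
    simpa [Nat.factorial] using this
  -- the function w and g
  have hP1ne : P 0 + 1 ≠ 0 := by rw [hP0]; norm_num
  have hwa : AnalyticAt ℂ (fun z => (P z - 1) / (P z + 1)) 0 :=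
    (hPa.sub analyticAt_const).div (hPa.add analyticAt_const) hP1ne
  have hwval : (fun z => (P z - 1) / (P z + 1)) 0 = 0 := by simp [hP0]
  set g : ℂ → ℂ := fun z => carcsinh ((P z - 1) / (P z + 1)) with hgdef
  have hga : AnalyticAt ℂ g 0 := by
    rw [hgdef]
    have hca : AnalyticAt ℂ carcsinh ((fun z => (P z - 1) / (P z + 1)) 0) := by
      rw [hwval]; exact my_carcsinh_analytic
    exact AnalyticAt.comp (f := fun z => (P z - 1) / (P z + 1)) (x := 0) hca hwa
  have hg0 : g 0 = 0 := by
    simp only [hgdef]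
    rw [show (P 0 - 1) / (P 0 + 1) = 0 by simp [hP0]]
    exact my_carcsinh_zero
  -- f is nonvanishing on a punctured neighborhood
  have hfne : ∀ᶠ z in 𝓝[≠] (0:ℂ), f z ≠ 0 := by
    rcases hfa.eventually_eq_zero_or_eventually_ne_zero with h | h
    · exfalso
      have h' : f =ᶠ[𝓝 (0:ℂ)] (fun _ => 0) := h
      have h2 : deriv f 0 = deriv (fun _ : ℂ => (0:ℂ)) 0 := h'.deriv.eq_of_nhds
      rw [hf1v, deriv_const] at h2
      exact one_ne_zero h2
    · exact h
  -- E1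
  have hU0 : (fun z => z * deriv f z - f z * (1 + g z)) =ᶠ[𝓝 (0:ℂ)] fun _ => 0 := by
    have h1 : ∀ᶠ z in 𝓝[≠] (0:ℂ), z * deriv f z - f z * (1 + g z) = 0 := by
      filter_upwards [hsub, hfne] with z hz hfz
      rw [div_eq_iff hfz] at hz
      simp only [hgdef]
      rw [hz]; ring
    rw [eventually_nhdsWithin_iff] at h1
    filter_upwards [h1] with z hz
    by_cases hz0 : z = 0
    · subst hz0
      simp [hf0]
    · exact hz (by simpa using hz0)
  -- E2
  have hcont_cond : ∀ᶠ u in 𝓝 (0:ℂ),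
      u ^ 2 + 1 ≠ 0 ∧ u + (u ^ 2 + 1) ^ ((1:ℂ)/2) ≠ 0 := by
    have c1 : ContinuousAt (fun u : ℂ => u ^ 2 + 1) 0 := by fun_prop
    have e1 := c1.eventually_ne (y := (0:ℂ)) (by norm_num)
    have c2 : ContinuousAt (fun u : ℂ => u + (u ^ 2 + 1) ^ ((1:ℂ)/2)) 0 :=
      my_F_analytic.continuousAt
    have e2 := c2.eventually_ne (y := (0:ℂ)) (by norm_num)
    exact e1.and e2
  have hwcont : ContinuousAt (fun z => (P z - 1) / (P z + 1)) 0 := hwa.continuousAt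
  have hcond_w : ∀ᶠ z in 𝓝 (0:ℂ),
      ((P z - 1) / (P z + 1)) ^ 2 + 1 ≠ 0 ∧
      (P z - 1) / (P z + 1) + (((P z - 1) / (P z + 1)) ^ 2 + 1) ^ ((1:ℂ)/2) ≠ 0 := by
    have h := hwcont.eventually (by rw [hwval]; exact hcont_cond)
    exact h
  have hPne : ∀ᶠ z in 𝓝 (0:ℂ), P z + 1 ≠ 0 := by
    have hc : ContinuousAt (fun z => P z + 1) 0 := hPa.continuousAt.add continuousAt_const
    exact hc.eventually_ne (y := (0:ℂ)) (by norm_num [hP0])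
  have hV0 : (fun z => (P z + 1) * Complex.sinh (g z) - (P z - 1)) =ᶠ[𝓝 (0:ℂ)] fun _ => 0 := by
    filter_upwards [hcond_w, hPne] with z hc hpz
    obtain ⟨hc1, hc2⟩ := hc
    simp only [hgdef]
    rw [my_sinh_carcsinh hc1 hc2]
    field_simp
    ring
  -- eventual analyticity
  have hfe : ∀ᶠ z in 𝓝 (0:ℂ), AnalyticAt ℂ f z := hfa.eventually_analyticAt
  have hge : ∀ᶠ z in 𝓝 (0:ℂ), AnalyticAt ℂ g z := hga.eventually_analyticAt
  have hPe : ∀ᶠ z in 𝓝 (0:ℂ), AnalyticAt ℂ P z := hPa.eventually_analyticAt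
  -- chain for E1
  have hU1 : (fun z => deriv f z + z * deriv (deriv f) z - deriv f z * (1 + g z)
      - f z * deriv g z) =ᶠ[𝓝 (0:ℂ)] fun _ => 0 := by
    apply my_step hU0
    filter_upwards [hfe, hge] with z hfz hgz
    have Hf : HasDerivAt f (deriv f z) z := hfz.differentiableAt.hasDerivAt
    have Hf1 : HasDerivAt (deriv f) (deriv (deriv f) z) z :=
      (my_analyticAt_deriv hfz).differentiableAt.hasDerivAt
    have Hg : HasDerivAt g (deriv g z) z := hgz.differentiableAt.hasDerivAt
    have H : HasDerivAt (fun y => y * deriv f y - f y * (1 + g y))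
        (1 * deriv f z + z * deriv (deriv f) z
          - (deriv f z * (1 + g z) + f z * (0 + deriv g z))) z :=
      ((hasDerivAt_id z).mul Hf1).sub (Hf.mul ((hasDerivAt_const z (1:ℂ)).add Hg))
    rw [H.deriv]; ring
  have hU2 : (fun z => 2 * deriv (deriv f) z + z * deriv (deriv (deriv f)) z
      - deriv (deriv f) z * (1 + g z) - 2 * (deriv f z * deriv g z)
      - f z * deriv (deriv g) z) =ᶠ[𝓝 (0:ℂ)] fun _ => 0 := by
    apply my_step hU1
    filter_upwards [hfe, hge] with z hfz hgz
    have Hf : HasDerivAt f (deriv f z) z := hfz.differentiableAt.hasDerivAt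
    have Hf1 : HasDerivAt (deriv f) (deriv (deriv f) z) z :=
      (my_analyticAt_deriv hfz).differentiableAt.hasDerivAt
    have Hf2 : HasDerivAt (deriv (deriv f)) (deriv (deriv (deriv f)) z) z :=
      (my_analyticAt_deriv (my_analyticAt_deriv hfz)).differentiableAt.hasDerivAt
    have Hg : HasDerivAt g (deriv g z) z := hgz.differentiableAt.hasDerivAt
    have Hg1 : HasDerivAt (deriv g) (deriv (deriv g) z) z :=
      (my_analyticAt_deriv hgz).differentiableAt.hasDerivAt
    have H : HasDerivAt (fun y => deriv f y + y * deriv (deriv f) y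
        - deriv f y * (1 + g y) - f y * deriv g y)
        (deriv (deriv f) z + (1 * deriv (deriv f) z + z * deriv (deriv (deriv f)) z)
          - (deriv (deriv f) z * (1 + g z) + deriv f z * (0 + deriv g z))
          - (deriv f z * deriv g z + f z * deriv (deriv g) z)) z :=
      (((Hf1.add ((hasDerivAt_id z).mul Hf2)).sub
        (Hf1.mul ((hasDerivAt_const z (1:ℂ)).add Hg))).sub (Hf.mul Hg1))
    rw [H.deriv]; ring
  have hU3 : (fun z => 3 * deriv (deriv (deriv f)) z + z * deriv (deriv (deriv (deriv f))) z
      - deriv (deriv (deriv f)) z * (1 + g z) - 3 * (deriv (deriv f) z * deriv g z)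
      - 3 * (deriv f z * deriv (deriv g) z)
      - f z * deriv (deriv (deriv g)) z) =ᶠ[𝓝 (0:ℂ)] fun _ => 0 := by
    apply my_step hU2
    filter_upwards [hfe, hge] with z hfz hgz
    have Hf : HasDerivAt f (deriv f z) z := hfz.differentiableAt.hasDerivAt
    have Hf1 : HasDerivAt (deriv f) (deriv (deriv f) z) z :=
      (my_analyticAt_deriv hfz).differentiableAt.hasDerivAt
    have Hf2 : HasDerivAt (deriv (deriv f)) (deriv (deriv (deriv f)) z) z :=
      (my_analyticAt_deriv (my_analyticAt_deriv hfz)).differentiableAt.hasDerivAt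
    have Hf3 : HasDerivAt (deriv (deriv (deriv f))) (deriv (deriv (deriv (deriv f))) z) z :=
      (my_analyticAt_deriv (my_analyticAt_deriv
        (my_analyticAt_deriv hfz))).differentiableAt.hasDerivAt
    have Hg : HasDerivAt g (deriv g z) z := hgz.differentiableAt.hasDerivAt
    have Hg1 : HasDerivAt (deriv g) (deriv (deriv g) z) z :=
      (my_analyticAt_deriv hgz).differentiableAt.hasDerivAt
    have Hg2 : HasDerivAt (deriv (deriv g)) (deriv (deriv (deriv g)) z) z :=
      (my_analyticAt_deriv (my_analyticAt_deriv hgz)).differentiableAt.hasDerivAt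
    have H : HasDerivAt (fun y => 2 * deriv (deriv f) y + y * deriv (deriv (deriv f)) y
        - deriv (deriv f) y * (1 + g y) - 2 * (deriv f y * deriv g y)
        - f y * deriv (deriv g) y)
        (2 * deriv (deriv (deriv f)) z
          + (1 * deriv (deriv (deriv f)) z + z * deriv (deriv (deriv (deriv f))) z)
          - (deriv (deriv (deriv f)) z * (1 + g z) + deriv (deriv f) z * (0 + deriv g z))
          - 2 * (deriv (deriv f) z * deriv g z + deriv f z * deriv (deriv g) z)
          - (deriv f z * deriv (deriv g) z + f z * deriv (deriv (deriv g)) z)) z :=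
      ((((HasDerivAt.const_mul (2:ℂ) Hf2).add ((hasDerivAt_id z).mul Hf3)).sub
          (Hf2.mul ((hasDerivAt_const z (1:ℂ)).add Hg))).sub
          (HasDerivAt.const_mul (2:ℂ) (Hf1.mul Hg1))).sub (Hf.mul Hg2)
    rw [H.deriv]; ring
  have hU4 : (fun z => 4 * deriv (deriv (deriv (deriv f))) z
      + z * deriv (deriv (deriv (deriv (deriv f)))) z
      - deriv (deriv (deriv (deriv f))) z * (1 + g z)
      - 4 * (deriv (deriv (deriv f)) z * deriv g z)
      - 6 * (deriv (deriv f) z * deriv (deriv g) z)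
      - 4 * (deriv f z * deriv (deriv (deriv g)) z)
      - f z * deriv (deriv (deriv (deriv g))) z) =ᶠ[𝓝 (0:ℂ)] fun _ => 0 := by
    apply my_step hU3
    filter_upwards [hfe, hge] with z hfz hgz
    have Hf : HasDerivAt f (deriv f z) z := hfz.differentiableAt.hasDerivAt
    have Hf1 : HasDerivAt (deriv f) (deriv (deriv f) z) z :=
      (my_analyticAt_deriv hfz).differentiableAt.hasDerivAt
    have Hf2 : HasDerivAt (deriv (deriv f)) (deriv (deriv (deriv f)) z) z :=
      (my_analyticAt_deriv (my_analyticAt_deriv hfz)).differentiableAt.hasDerivAt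
    have Hf3 : HasDerivAt (deriv (deriv (deriv f))) (deriv (deriv (deriv (deriv f))) z) z :=
      (my_analyticAt_deriv (my_analyticAt_deriv
        (my_analyticAt_deriv hfz))).differentiableAt.hasDerivAt
    have Hf4 : HasDerivAt (deriv (deriv (deriv (deriv f))))
        (deriv (deriv (deriv (deriv (deriv f)))) z) z :=
      (my_analyticAt_deriv (my_analyticAt_deriv (my_analyticAt_deriv
        (my_analyticAt_deriv hfz)))).differentiableAt.hasDerivAt
    have Hg : HasDerivAt g (deriv g z) z := hgz.differentiableAt.hasDerivAt
    have Hg1 : HasDerivAt (deriv g) (deriv (deriv g) z) z :=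
      (my_analyticAt_deriv hgz).differentiableAt.hasDerivAt
    have Hg2 : HasDerivAt (deriv (deriv g)) (deriv (deriv (deriv g)) z) z :=
      (my_analyticAt_deriv (my_analyticAt_deriv hgz)).differentiableAt.hasDerivAt
    have Hg3 : HasDerivAt (deriv (deriv (deriv g))) (deriv (deriv (deriv (deriv g))) z) z :=
      (my_analyticAt_deriv (my_analyticAt_deriv
        (my_analyticAt_deriv hgz))).differentiableAt.hasDerivAt
    have H : HasDerivAt (fun y => 3 * deriv (deriv (deriv f)) y
        + y * deriv (deriv (deriv (deriv f))) y
        - deriv (deriv (deriv f)) y * (1 + g y) - 3 * (deriv (deriv f) y * deriv g y)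
        - 3 * (deriv f y * deriv (deriv g) y) - f y * deriv (deriv (deriv g)) y)
        (3 * deriv (deriv (deriv (deriv f))) z
          + (1 * deriv (deriv (deriv (deriv f))) z + z * deriv (deriv (deriv (deriv (deriv f)))) z)
          - (deriv (deriv (deriv (deriv f))) z * (1 + g z)
            + deriv (deriv (deriv f)) z * (0 + deriv g z))
          - 3 * (deriv (deriv (deriv f)) z * deriv g z + deriv (deriv f) z * deriv (deriv g) z)
          - 3 * (deriv (deriv f) z * deriv (deriv g) z + deriv f z * deriv (deriv (deriv g)) z)
          - (deriv f z * deriv (deriv (deriv g)) z + f z * deriv (deriv (deriv (deriv g))) z)) z :=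
      (((((HasDerivAt.const_mul (3:ℂ) Hf3).add ((hasDerivAt_id z).mul Hf4)).sub
          (Hf3.mul ((hasDerivAt_const z (1:ℂ)).add Hg))).sub
          (HasDerivAt.const_mul (3:ℂ) (Hf2.mul Hg1))).sub
          (HasDerivAt.const_mul (3:ℂ) (Hf1.mul Hg2))).sub (Hf.mul Hg3)
    rw [H.deriv]; ring
  -- chain for E2
  have hV1 : (fun z => deriv P z * Complex.sinh (g z)
      + (P z + 1) * (Complex.cosh (g z) * deriv g z) - deriv P z) =ᶠ[𝓝 (0:ℂ)] fun _ => 0 := by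
    apply my_step hV0
    filter_upwards [hPe, hge] with z hPz hgz
    have HP : HasDerivAt P (deriv P z) z := hPz.differentiableAt.hasDerivAt
    have Hg : HasDerivAt g (deriv g z) z := hgz.differentiableAt.hasDerivAt
    have Hsinh : HasDerivAt (fun y => Complex.sinh (g y)) (Complex.cosh (g z) * deriv g z) z :=
      (Complex.hasDerivAt_sinh (g z)).comp z Hg
    have H : HasDerivAt (fun y => (P y + 1) * Complex.sinh (g y) - (P y - 1))
        (deriv P z * Complex.sinh (g z) + (P z + 1) * (Complex.cosh (g z) * deriv g z)
          - deriv P z) z :=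
      ((HP.add_const 1).mul Hsinh).sub (HP.sub_const 1)
    rw [H.deriv]
  have hV2 : (fun z => deriv (deriv P) z * Complex.sinh (g z)
      + 2 * (deriv P z * (Complex.cosh (g z) * deriv g z))
      + (P z + 1) * (Complex.sinh (g z) * deriv g z * deriv g z
        + Complex.cosh (g z) * deriv (deriv g) z)
      - deriv (deriv P) z) =ᶠ[𝓝 (0:ℂ)] fun _ => 0 := by
    apply my_step hV1
    filter_upwards [hPe, hge] with z hPz hgz
    have HP : HasDerivAt P (deriv P z) z := hPz.differentiableAt.hasDerivAt
    have HP1 : HasDerivAt (deriv P) (deriv (deriv P) z) z :=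
      (my_analyticAt_deriv hPz).differentiableAt.hasDerivAt
    have Hg : HasDerivAt g (deriv g z) z := hgz.differentiableAt.hasDerivAt
    have Hg1 : HasDerivAt (deriv g) (deriv (deriv g) z) z :=
      (my_analyticAt_deriv hgz).differentiableAt.hasDerivAt
    have Hsinh : HasDerivAt (fun y => Complex.sinh (g y)) (Complex.cosh (g z) * deriv g z) z :=
      (Complex.hasDerivAt_sinh (g z)).comp z Hg
    have Hcosh : HasDerivAt (fun y => Complex.cosh (g y)) (Complex.sinh (g z) * deriv g z) z :=
      (Complex.hasDerivAt_cosh (g z)).comp z Hg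
    have H : HasDerivAt (fun y => deriv P y * Complex.sinh (g y)
        + (P y + 1) * (Complex.cosh (g y) * deriv g y) - deriv P y)
        ((deriv (deriv P) z * Complex.sinh (g z) + deriv P z * (Complex.cosh (g z) * deriv g z))
          + (deriv P z * (Complex.cosh (g z) * deriv g z)
            + (P z + 1) * (Complex.sinh (g z) * deriv g z * deriv g z
              + Complex.cosh (g z) * deriv (deriv g) z))
          - deriv (deriv P) z) z :=
      ((HP1.mul Hsinh).add ((HP.add_const 1).mul (Hcosh.mul Hg1))).sub HP1
    rw [H.deriv]; ring
  have hV3 : (fun z => deriv (deriv (deriv P)) z * Complex.sinh (g z)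
      + 3 * (deriv (deriv P) z * (Complex.cosh (g z) * deriv g z))
      + 3 * (deriv P z * (Complex.sinh (g z) * deriv g z * deriv g z
        + Complex.cosh (g z) * deriv (deriv g) z))
      + (P z + 1) * (Complex.cosh (g z) * deriv g z * deriv g z * deriv g z
        + 3 * (Complex.sinh (g z) * deriv g z * deriv (deriv g) z)
        + Complex.cosh (g z) * deriv (deriv (deriv g)) z)
      - deriv (deriv (deriv P)) z) =ᶠ[𝓝 (0:ℂ)] fun _ => 0 := by
    apply my_step hV2
    filter_upwards [hPe, hge] with z hPz hgz
    have HP : HasDerivAt P (deriv P z) z := hPz.differentiableAt.hasDerivAt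
    have HP1 : HasDerivAt (deriv P) (deriv (deriv P) z) z :=
      (my_analyticAt_deriv hPz).differentiableAt.hasDerivAt
    have HP2 : HasDerivAt (deriv (deriv P)) (deriv (deriv (deriv P)) z) z :=
      (my_analyticAt_deriv (my_analyticAt_deriv hPz)).differentiableAt.hasDerivAt
    have Hg : HasDerivAt g (deriv g z) z := hgz.differentiableAt.hasDerivAt
    have Hg1 : HasDerivAt (deriv g) (deriv (deriv g) z) z :=
      (my_analyticAt_deriv hgz).differentiableAt.hasDerivAt
    have Hg2 : HasDerivAt (deriv (deriv g)) (deriv (deriv (deriv g)) z) z :=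
      (my_analyticAt_deriv (my_analyticAt_deriv hgz)).differentiableAt.hasDerivAt
    have Hsinh : HasDerivAt (fun y => Complex.sinh (g y)) (Complex.cosh (g z) * deriv g z) z :=
      (Complex.hasDerivAt_sinh (g z)).comp z Hg
    have Hcosh : HasDerivAt (fun y => Complex.cosh (g y)) (Complex.sinh (g z) * deriv g z) z :=
      (Complex.hasDerivAt_cosh (g z)).comp z Hg
    have H : HasDerivAt (fun y => deriv (deriv P) y * Complex.sinh (g y)
        + 2 * (deriv P y * (Complex.cosh (g y) * deriv g y))
        + (P y + 1) * (Complex.sinh (g y) * deriv g y * deriv g y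
          + Complex.cosh (g y) * deriv (deriv g) y)
        - deriv (deriv P) y)
        ((deriv (deriv (deriv P)) z * Complex.sinh (g z)
            + deriv (deriv P) z * (Complex.cosh (g z) * deriv g z))
          + 2 * (deriv (deriv P) z * (Complex.cosh (g z) * deriv g z)
            + deriv P z * (Complex.sinh (g z) * deriv g z * deriv g z
              + Complex.cosh (g z) * deriv (deriv g) z))
          + (deriv P z * (Complex.sinh (g z) * deriv g z * deriv g z
              + Complex.cosh (g z) * deriv (deriv g) z)
            + (P z + 1) * (((Complex.cosh (g z) * deriv g z * deriv g z
                + Complex.sinh (g z) * deriv (deriv g) z) * deriv g z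
              + Complex.sinh (g z) * deriv g z * deriv (deriv g) z)
              + (Complex.sinh (g z) * deriv g z * deriv (deriv g) z
                + Complex.cosh (g z) * deriv (deriv (deriv g)) z)))
          - deriv (deriv (deriv P)) z) z :=
      (((HP2.mul Hsinh).add
          (HasDerivAt.const_mul (2:ℂ) (HP1.mul (Hcosh.mul Hg1)))).add
          ((HP.add_const 1).mul (((Hsinh.mul Hg1).mul Hg1).add (Hcosh.mul Hg2)))).sub HP2
    rw [H.deriv]; ring
  -- evaluate everything at 0
  have eU2 : 2 * deriv (deriv f) 0 + 0 * deriv (deriv (deriv f)) 0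
      - deriv (deriv f) 0 * (1 + g 0) - 2 * (deriv f 0 * deriv g 0)
      - f 0 * deriv (deriv g) 0 = 0 := hU2.eq_of_nhds
  have eU3 : 3 * deriv (deriv (deriv f)) 0 + 0 * deriv (deriv (deriv (deriv f))) 0
      - deriv (deriv (deriv f)) 0 * (1 + g 0) - 3 * (deriv (deriv f) 0 * deriv g 0)
      - 3 * (deriv f 0 * deriv (deriv g) 0)
      - f 0 * deriv (deriv (deriv g)) 0 = 0 := hU3.eq_of_nhds
  have eU4 : 4 * deriv (deriv (deriv (deriv f))) 0
      + 0 * deriv (deriv (deriv (deriv (deriv f)))) 0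
      - deriv (deriv (deriv (deriv f))) 0 * (1 + g 0)
      - 4 * (deriv (deriv (deriv f)) 0 * deriv g 0)
      - 6 * (deriv (deriv f) 0 * deriv (deriv g) 0)
      - 4 * (deriv f 0 * deriv (deriv (deriv g)) 0)
      - f 0 * deriv (deriv (deriv (deriv g))) 0 = 0 := hU4.eq_of_nhds
  have eV1 : deriv P 0 * Complex.sinh (g 0)
      + (P 0 + 1) * (Complex.cosh (g 0) * deriv g 0) - deriv P 0 = 0 := hV1.eq_of_nhds
  have eV2 : deriv (deriv P) 0 * Complex.sinh (g 0)
      + 2 * (deriv P 0 * (Complex.cosh (g 0) * deriv g 0))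
      + (P 0 + 1) * (Complex.sinh (g 0) * deriv g 0 * deriv g 0
        + Complex.cosh (g 0) * deriv (deriv g) 0)
      - deriv (deriv P) 0 = 0 := hV2.eq_of_nhds
  have eV3 : deriv (deriv (deriv P)) 0 * Complex.sinh (g 0)
      + 3 * (deriv (deriv P) 0 * (Complex.cosh (g 0) * deriv g 0))
      + 3 * (deriv P 0 * (Complex.sinh (g 0) * deriv g 0 * deriv g 0
        + Complex.cosh (g 0) * deriv (deriv g) 0))
      + (P 0 + 1) * (Complex.cosh (g 0) * deriv g 0 * deriv g 0 * deriv g 0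
        + 3 * (Complex.sinh (g 0) * deriv g 0 * deriv (deriv g) 0)
        + Complex.cosh (g 0) * deriv (deriv (deriv g)) 0)
      - deriv (deriv (deriv P)) 0 = 0 := hV3.eq_of_nhds
  rw [hg0, Complex.sinh_zero, Complex.cosh_zero, hP0, hp1v] at eV1
  rw [hg0, Complex.sinh_zero, Complex.cosh_zero, hP0, hp1v, hp2v] at eV2
  rw [hg0, Complex.sinh_zero, Complex.cosh_zero, hP0, hp1v, hp2v, hp3v] at eV3
  rw [hf0, hg0, hf1v, hf2v] at eU2
  rw [hf0, hg0, hf1v, hf2v, hf3v] at eU3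
  rw [hf0, hg0, hf1v, hf2v, hf3v, hf4v] at eU4
  have hγ1 : deriv g 0 = p 1 / 2 := by linear_combination eV1 / 2
  have hγ2 : deriv (deriv g) 0 = p 2 - p 1 ^ 2 / 2 := by
    rw [hγ1] at eV2
    linear_combination eV2 / 2
  have hγ3 : deriv (deriv (deriv g)) 0
      = 3 * p 3 - 3 * p 2 * (p 1 / 2) - (3/2) * p 1 * (p 2 - p 1 ^ 2 / 2) - (p 1 / 2) ^ 3 := by
    rw [hγ1, hγ2] at eV3
    linear_combination eV3 / 2
  have ha2 : a 2 = p 1 / 2 := by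
    rw [hγ1] at eU2
    linear_combination eU2 / 2
  have ha3 : a 3 = p 2 / 4 := by
    rw [hγ1, hγ2, ha2] at eU3
    linear_combination eU3 / 12
  have ha4 : a 4 = (-(p 1) ^ 3 - 6 * p 1 * p 2 + 24 * p 3) / 144 := by
    rw [hγ1, hγ2, hγ3, ha2, ha3] at eU4
    linear_combination eU4 / 72
  exact ⟨ha2, ha3, ha4⟩
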